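/- If a sequence (a_K)_{K≥3} of nonnegative reals satisfies a_K ≤ C₀ for K ≤ 5 and, for k ≥ 4, a_{k+3} ≤ 12·∑_{i=2}^{k-2} C(k,i)·a_{i+3}·a_{k-i+3} + 24k·a₄·a_{k+2}, then for C sufficiently large (depending only on C₀), a_K ≤ C^{K-4}·(K-5)! for all K ≥ 5. -/

import Mathlib

open Finset

private lemma tel_sum (m : ℕ) :
    ∑ i ∈ Finset.Icc 2 m, (1:ℝ) / ((i * (i-1) : ℕ) : ℝ) ≤ 1 - 1 / m := by
  induction m with
  | zero => simp
  | succ n ih =>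
    rcases Nat.lt_or_ge n 1 with h | h
    · interval_cases n <;> simp
    · rw [Finset.sum_Icc_succ_top (by omega : 2 ≤ n + 1)]
      have hrw : ((n+1) * (n+1-1) : ℕ) = (n+1) * n := by simp
      rw [hrw]
      have hn : (0:ℝ) < n := by exact_mod_cast h
      have key : (1:ℝ) / (((n+1) * n : ℕ) : ℝ) = 1/(n:ℝ) - 1/((n:ℝ)+1) := by
        push_cast
        field_simp
        ring
      rw [key]
      have hc : ((n+1:ℕ) : ℝ) = (n:ℝ)+1 := by push_cast; ring
      rw [hc]
      linarith

private lemma key_term (k i : ℕ) (h2 : 2 ≤ i) (hik : i ≤ k - 2) (hk : 4 ≤ k) :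
    (k.choose i : ℝ) * ((i-2).factorial : ℝ) * (((k-i-2).factorial : ℝ)) ≤
      4 * ((k-2).factorial : ℝ) / ((i * (i-1) : ℕ) : ℝ)
      + 4 * ((k-2).factorial : ℝ) / (((k-i) * (k-i-1) : ℕ) : ℝ) := by
  obtain ⟨p, hp⟩ : ∃ p, i = p + 2 := ⟨i - 2, by omega⟩
  obtain ⟨q, hq⟩ : ∃ q, k = i + q + 2 := ⟨k - i - 2, by omega⟩
  subst hp; subst hq
  rw [show p+2+q+2 - (p+2) = q+2 by omega, show p+2-2 = p by omega,
    show q+2-2 = q by omega, show p+2+q+2-2 = p+q+2 by omega,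
    show p+2-1 = p+1 by omega, show q+2-1 = q+1 by omega]
  have hA : (0:ℝ) < (((p+2) * (p+1) : ℕ) : ℝ) := by positivity
  have hB : (0:ℝ) < (((q+2) * (q+1) : ℕ) : ℝ) := by positivity
  rw [div_add_div _ _ (ne_of_gt hA) (ne_of_gt hB), le_div_iff₀ (by positivity)]
  have hnat : (p+2+q+2).choose (p+2) * p.factorial * q.factorial
      * ((p+2) * (p+1) * ((q+2) * (q+1))) = (p+2+q+2).factorial := by
    have h1 : (p+2+q+2).choose (p+2) * (p+2).factorial * (q+2).factorial
        = (p+2+q+2).factorial := by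
      have := Nat.choose_mul_factorial_mul_factorial
        (show p+2 ≤ p+2+q+2 by omega)
      rw [show p+2+q+2 - (p+2) = q+2 by omega] at this
      exact this
    calc (p+2+q+2).choose (p+2) * p.factorial * q.factorial
        * ((p+2) * (p+1) * ((q+2) * (q+1)))
        = (p+2+q+2).choose (p+2) * ((p+2) * ((p+1) * p.factorial))
          * ((q+2) * ((q+1) * q.factorial)) := by ring
      _ = (p+2+q+2).choose (p+2) * (p+2).factorial * (q+2).factorial := by
          rw [show (p+2) * ((p+1) * p.factorial) = (p+2).factorial by
                rw [show p+2 = (p+1)+1 by omega, Nat.factorial_succ, Nat.factorial_succ],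
              show (q+2) * ((q+1) * q.factorial) = (q+2).factorial by
                rw [show q+2 = (q+1)+1 by omega, Nat.factorial_succ, Nat.factorial_succ]]
      _ = (p+2+q+2).factorial := h1
  have hfac : (p+2+q+2).factorial
      = (p+q+4) * ((p+q+3) * (p+q+2).factorial) := by
    rw [show p+2+q+2 = (p+q+3)+1 by omega, Nat.factorial_succ,
      show p+q+3 = (p+q+2)+1 by omega, Nat.factorial_succ]
  have hc : ((p+2+q+2).choose (p+2) * p.factorial * q.factorial
      * ((p+2) * (p+1) * ((q+2) * (q+1))) : ℕ)
      = (p+q+4) * ((p+q+3) * (p+q+2).factorial) := hnat.trans hfac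
  have hcr := congrArg (fun n : ℕ => (n:ℝ)) hc
  push_cast at hcr
  have hfp : (0:ℝ) ≤ ((p+q+2).factorial : ℝ) := by positivity
  have hp0 : (0:ℝ) ≤ (p:ℝ) := by positivity
  have hq0 : (0:ℝ) ≤ (q:ℝ) := by positivity
  calc (((p+2+q+2).choose (p+2)) : ℝ) * (p.factorial : ℝ) * (q.factorial : ℝ)
      * ((((p+2) * (p+1) : ℕ) : ℝ) * (((q+2) * (q+1) : ℕ) : ℝ))
      = ((p:ℝ)+(q:ℝ)+4) * ((p:ℝ)+(q:ℝ)+3) * ((p+q+2).factorial : ℝ) := by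
        push_cast
        linear_combination hcr
    _ ≤ 4 * ((p+q+2).factorial : ℝ) * (((q+2) * (q+1) : ℕ) : ℝ)
        + 4 * ((p+q+2).factorial : ℝ) * (((p+2) * (p+1) : ℕ) : ℝ) := by
        push_cast
        nlinarith [mul_nonneg hfp (sq_nonneg ((p:ℝ) - (q:ℝ))),
          mul_nonneg hfp hp0, mul_nonneg hfp hq0, hfp]
    _ = _ := by ring

private lemma key_sum (k : ℕ) (hk : 4 ≤ k) :
    ∑ i ∈ Finset.Icc 2 (k-2), (k.choose i : ℝ) * ((i-2).factorial : ℝ)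
      * ((k-i-2).factorial : ℝ) ≤ 8 * ((k-2).factorial : ℝ) := by
  have step1 : ∑ i ∈ Finset.Icc 2 (k-2), (k.choose i : ℝ) * ((i-2).factorial : ℝ)
      * ((k-i-2).factorial : ℝ)
      ≤ ∑ i ∈ Finset.Icc 2 (k-2), (4 * ((k-2).factorial : ℝ) / ((i * (i-1) : ℕ) : ℝ)
        + 4 * ((k-2).factorial : ℝ) / (((k-i) * (k-i-1) : ℕ) : ℝ)) := by
    apply Finset.sum_le_sum
    intro i hi
    rw [Finset.mem_Icc] at hi
    exact key_term k i hi.1 hi.2 hk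
  have hrefl : ∑ i ∈ Finset.Icc 2 (k-2), (1:ℝ) / (((k-i) * (k-i-1) : ℕ) : ℝ)
      = ∑ i ∈ Finset.Icc 2 (k-2), (1:ℝ) / ((i * (i-1) : ℕ) : ℝ) := by
    apply Finset.sum_nbij' (fun i => k - i) (fun i => k - i)
    · intro i hi; rw [Finset.mem_Icc] at hi ⊢; omega
    · intro i hi; rw [Finset.mem_Icc] at hi ⊢; omega
    · intro i hi; rw [Finset.mem_Icc] at hi; omega
    · intro i hi; rw [Finset.mem_Icc] at hi; omega
    · intro i _; rfl
  have htel := tel_sum (k-2)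
  have h0 : (0:ℝ) ≤ 1 / ((k-2 : ℕ) : ℝ) := by positivity
  have hle1 : ∑ i ∈ Finset.Icc 2 (k-2), (1:ℝ) / ((i * (i-1) : ℕ) : ℝ) ≤ 1 := by
    linarith
  have hfp : (0:ℝ) ≤ 4 * ((k-2).factorial : ℝ) := by positivity
  have hsplit : ∑ i ∈ Finset.Icc 2 (k-2), (4 * ((k-2).factorial : ℝ) / ((i * (i-1) : ℕ) : ℝ)
        + 4 * ((k-2).factorial : ℝ) / (((k-i) * (k-i-1) : ℕ) : ℝ))
      = 4 * ((k-2).factorial : ℝ) * (∑ i ∈ Finset.Icc 2 (k-2), (1:ℝ) / ((i * (i-1) : ℕ) : ℝ))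
      + 4 * ((k-2).factorial : ℝ)
        * (∑ i ∈ Finset.Icc 2 (k-2), (1:ℝ) / (((k-i) * (k-i-1) : ℕ) : ℝ)) := by
    rw [Finset.sum_add_distrib, Finset.mul_sum, Finset.mul_sum]
    congr 1 <;> apply Finset.sum_congr rfl <;> intro i _ <;> ring
  calc _ ≤ _ := step1
    _ = _ := hsplit
    _ ≤ 4 * ((k-2).factorial : ℝ) * 1 + 4 * ((k-2).factorial : ℝ) * 1 := by
        rw [hrefl]
        have h1 := mul_le_mul_of_nonneg_left hle1 hfp
        linarith
    _ = 8 * ((k-2).factorial : ℝ) := by ring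

theorem stmt_5 (C₀ : ℝ) (a : ℕ → ℝ)
    (hnonneg : ∀ K, 3 ≤ K → 0 ≤ a K)
    (hsmall : ∀ K, 3 ≤ K → K ≤ 5 → a K ≤ C₀)
    (hrec : ∀ k, 4 ≤ k →
      a (k + 3) ≤ 12 * ∑ i ∈ Finset.Icc 2 (k - 2), (k.choose i : ℝ) * a (i + 3) * a (k - i + 3)
        + 24 * (k : ℝ) * a 4 * a (k + 2)) :
    ∃ C₁ : ℝ, ∀ C : ℝ, C₁ ≤ C → ∀ K, 5 ≤ K →
      a K ≤ C ^ (K - 4) * ((K - 5).factorial : ℝ) := by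
  have hC0 : 0 ≤ C₀ := le_trans (hnonneg 3 le_rfl) (hsmall 3 le_rfl (by norm_num))
  refine ⟨max (96 + 48 * C₀) (max 1 (a 6)), fun C hC K hK => ?_⟩
  have hC96 : 96 + 48 * C₀ ≤ C := le_trans (le_max_left _ _) hC
  have hC1 : (1:ℝ) ≤ C := le_trans (le_trans (le_max_left _ _) (le_max_right _ _)) hC
  have hCa6 : a 6 ≤ C := le_trans (le_trans (le_max_right _ _) (le_max_right _ _)) hC
  have hCpos : (0:ℝ) < C := by linarith
  have hC0le : C₀ ≤ C := by nlinarith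
  induction K using Nat.strong_induction_on with
  | _ K IH =>
    rcases Nat.lt_or_ge K 7 with h7 | h7
    · interval_cases K
      · simpa using le_trans (hsmall 5 (by norm_num) le_rfl) hC0le
      · have he : C ^ (6-4) * ((6-5).factorial : ℝ) = C * C := by norm_num [sq]
        rw [he]
        nlinarith
    · obtain ⟨k, rfl⟩ : ∃ k, K = k + 3 := ⟨K - 3, by omega⟩
      have hk4 : 4 ≤ k := by omega
      have hbnd := hrec k hk4
      have hsum1 : ∑ i ∈ Finset.Icc 2 (k - 2), (k.choose i : ℝ) * a (i + 3) * a (k - i + 3)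
          ≤ ∑ i ∈ Finset.Icc 2 (k - 2), (k.choose i : ℝ)
            * (C ^ (i-1) * ((i-2).factorial : ℝ))
            * (C ^ (k-i-1) * ((k-i-2).factorial : ℝ)) := by
        apply Finset.sum_le_sum
        intro i hi
        rw [Finset.mem_Icc] at hi
        have hi3 : a (i+3) ≤ C ^ ((i+3)-4) * (((i+3)-5).factorial : ℝ) :=
          IH (i+3) (by omega) (by omega)
        have hki3 : a (k-i+3) ≤ C ^ ((k-i+3)-4) * (((k-i+3)-5).factorial : ℝ) :=
          IH (k-i+3) (by omega) (by omega)
        rw [show (i+3)-4 = i-1 by omega, show (i+3)-5 = i-2 by omega] at hi3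
        rw [show (k-i+3)-4 = k-i-1 by omega, show (k-i+3)-5 = k-i-2 by omega] at hki3
        have h1 : 0 ≤ a (i+3) := hnonneg _ (by omega)
        have h2 : 0 ≤ a (k-i+3) := hnonneg _ (by omega)
        have hch : (0:ℝ) ≤ (k.choose i : ℝ) := by positivity
        have hb2 : (0:ℝ) ≤ C ^ (i-1) * ((i-2).factorial : ℝ) := by positivity
        calc (k.choose i : ℝ) * a (i+3) * a (k-i+3)
            = (k.choose i : ℝ) * (a (i+3) * a (k-i+3)) := by ring
          _ ≤ (k.choose i : ℝ) * ((C ^ (i-1) * ((i-2).factorial : ℝ))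
              * (C ^ (k-i-1) * ((k-i-2).factorial : ℝ))) :=
              mul_le_mul_of_nonneg_left (mul_le_mul hi3 hki3 h2 hb2) hch
          _ = _ := by ring
      have hsum2 : ∑ i ∈ Finset.Icc 2 (k - 2), (k.choose i : ℝ)
            * (C ^ (i-1) * ((i-2).factorial : ℝ))
            * (C ^ (k-i-1) * ((k-i-2).factorial : ℝ))
          = C ^ (k-2) * ∑ i ∈ Finset.Icc 2 (k-2), (k.choose i : ℝ)
            * ((i-2).factorial : ℝ) * ((k-i-2).factorial : ℝ) := by
        rw [Finset.mul_sum]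
        apply Finset.sum_congr rfl
        intro i hi
        rw [Finset.mem_Icc] at hi
        have hpw : C ^ (i-1) * C ^ (k-i-1) = C ^ (k-2) := by
          rw [← pow_add, show (i-1) + (k-i-1) = k - 2 by omega]
        calc (k.choose i : ℝ) * (C ^ (i-1) * ((i-2).factorial : ℝ))
            * (C ^ (k-i-1) * ((k-i-2).factorial : ℝ))
            = (C ^ (i-1) * C ^ (k-i-1)) * ((k.choose i : ℝ)
              * ((i-2).factorial : ℝ) * ((k-i-2).factorial : ℝ)) := by ring
          _ = _ := by rw [hpw]
      have hks := key_sum k hk4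
      have hCk2 : (0:ℝ) < C ^ (k-2) := by positivity
      have hsum3 : ∑ i ∈ Finset.Icc 2 (k - 2), (k.choose i : ℝ) * a (i + 3) * a (k - i + 3)
          ≤ C ^ (k-2) * (8 * ((k-2).factorial : ℝ)) := by
        refine le_trans (le_trans hsum1 (le_of_eq hsum2)) ?_
        exact mul_le_mul_of_nonneg_left hks (le_of_lt hCk2)
      have ha4 : a 4 ≤ C₀ := hsmall 4 (by norm_num) (by norm_num)
      have ha4n : 0 ≤ a 4 := hnonneg 4 (by norm_num)
      have hak2 : a (k+2) ≤ C ^ (k-2) * ((k-3).factorial : ℝ) := by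
        have := IH (k+2) (by omega) (by omega)
        rwa [show (k+2)-4 = k-2 by omega, show (k+2)-5 = k-3 by omega] at this
      have hak2n : 0 ≤ a (k+2) := hnonneg _ (by omega)
      have hkpos : (0:ℝ) ≤ 24 * (k:ℝ) := by positivity
      have hmm := mul_le_mul ha4 hak2 hak2n hC0
      have hterm2 : 24 * (k : ℝ) * a 4 * a (k + 2)
          ≤ 24 * (k : ℝ) * C₀ * (C ^ (k-2) * ((k-3).factorial : ℝ)) := by
        calc 24 * (k : ℝ) * a 4 * a (k + 2)
            = 24 * (k:ℝ) * (a 4 * a (k+2)) := by ring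
          _ ≤ 24 * (k:ℝ) * (C₀ * (C ^ (k-2) * ((k-3).factorial : ℝ))) :=
              mul_le_mul_of_nonneg_left hmm hkpos
          _ = _ := by ring
      rw [show (k+3)-4 = k-1 by omega, show (k+3)-5 = k-2 by omega]
      have hfacsplit : ((k-2).factorial : ℝ) = ((k-2 : ℕ):ℝ) * ((k-3).factorial : ℝ) := by
        rw [show k-2 = (k-3)+1 by omega, Nat.factorial_succ]
        push_cast [show (k-3)+1 = k-2 by omega]
        ring
      have hpow : C ^ (k-1) = C * C ^ (k-2) := by
        rw [← pow_succ', show (k-2)+1 = k-1 by omega]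
      have hk2r : (2:ℝ) ≤ ((k-2:ℕ):ℝ) := by exact_mod_cast (show (2:ℕ) ≤ k - 2 by omega)
      have hkr : ((k:ℕ):ℝ) ≤ 2 * ((k-2:ℕ):ℝ) := by
        have h := (show (k:ℕ) ≤ 2 * (k-2) by omega)
        exact_mod_cast h
      have hkey : 96 * ((k-2:ℕ):ℝ) + 24 * (k:ℝ) * C₀ ≤ C * ((k-2:ℕ):ℝ) := by
        have t1 : (96 + 48*C₀) * ((k-2:ℕ):ℝ) ≤ C * ((k-2:ℕ):ℝ) :=
          mul_le_mul_of_nonneg_right hC96 (by linarith)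
        have t2 : 24*C₀*(k:ℝ) ≤ 24*C₀*(2*((k-2:ℕ):ℝ)) :=
          mul_le_mul_of_nonneg_left hkr (by linarith)
        nlinarith [t1, t2]
      have hfin : 12 * (C ^ (k-2) * (8 * ((k-2).factorial : ℝ)))
          + 24 * (k : ℝ) * C₀ * (C ^ (k-2) * ((k-3).factorial : ℝ))
          ≤ C ^ (k-1) * ((k-2).factorial : ℝ) := by
        rw [hpow, hfacsplit]
        calc 12 * (C ^ (k-2) * (8 * (((k-2:ℕ):ℝ) * ((k-3).factorial : ℝ))))
            + 24 * (k : ℝ) * C₀ * (C ^ (k-2) * ((k-3).factorial : ℝ))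
            = (96 * ((k-2:ℕ):ℝ) + 24 * (k:ℝ) * C₀)
              * (C ^ (k-2) * ((k-3).factorial : ℝ)) := by ring
          _ ≤ (C * ((k-2:ℕ):ℝ)) * (C ^ (k-2) * ((k-3).factorial : ℝ)) :=
              mul_le_mul_of_nonneg_right hkey (by positivity)
          _ = C * C ^ (k-2) * (((k-2:ℕ):ℝ) * ((k-3).factorial : ℝ)) := by ring
      calc a (k+3) ≤ _ := hbnd
        _ ≤ 12 * (C ^ (k-2) * (8 * ((k-2).factorial : ℝ)))
            + 24 * (k : ℝ) * C₀ * (C ^ (k-2) * ((k-3).factorial : ℝ)) := by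
            have h12 := mul_le_mul_of_nonneg_left hsum3 (by norm_num : (0:ℝ) ≤ 12)
            linarith
        _ ≤ _ := hfin
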